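/- Let G be a bipartite looped-free simple graph with vertex classes V₁ and V₂, with V₂ written in terms of the biadjacency matrix A₁ (rows indexed by V₁, columns by V₂). Then M[IA(G)] is isomorphic to the direct sum M ⊕ M*, where M is the binary matroid represented by (I | A₁). -/

import Mathlib

/-- Adjacency matrix over GF(2) of the bipartite simple graph with classes `V₁, V₂` and
biadjacency matrix `A₁ : Matrix V₁ V₂`. -/
def bipAdj {V₁ V₂ : Type} (A₁ : Matrix V₁ V₂ (ZMod 2)) :
    Matrix (V₁ ⊕ V₂) (V₁ ⊕ V₂) (ZMod 2)
  | Sum.inl i, Sum.inr j => A₁ i j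
  | Sum.inr j, Sum.inl i => A₁ i j
  | _, _ => 0

/-- Columns of a matrix `IA = (I | B)` over GF(2). -/
def iaCol {V : Type} [DecidableEq V] (B : Matrix V V (ZMod 2)) :
    V ⊕ V → V → ZMod 2
  | Sum.inl v => fun w => if w = v then 1 else 0
  | Sum.inr v => fun w => B w v

/-- Independence in `M[IA(G)]`. -/
def iaIndep {V : Type} [DecidableEq V] (B : Matrix V V (ZMod 2))
    (S : Set (V ⊕ V)) : Prop :=
  LinearIndependent (ZMod 2) (S.restrict (iaCol B))

/-- Columns of the matrix `(I | A₁)`, the representation of the binary matroid `M`: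
`Sum.inl i` is the `i`-th identity column, `Sum.inr j` the `j`-th column of `A₁`. -/
def bimCol {V₁ V₂ : Type} [DecidableEq V₁] (A₁ : Matrix V₁ V₂ (ZMod 2)) :
    V₁ ⊕ V₂ → V₁ → ZMod 2
  | Sum.inl i => fun w => if w = i then 1 else 0
  | Sum.inr j => fun w => A₁ w j

/-- Independence in the binary matroid `M` represented by `(I | A₁)`. -/
def bimIndep {V₁ V₂ : Type} [DecidableEq V₁] (A₁ : Matrix V₁ V₂ (ZMod 2))
    (S : Set (V₁ ⊕ V₂)) : Prop :=
  LinearIndependent (ZMod 2) (S.restrict (bimCol A₁))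

/-- Bases of `M`. -/
def bimBasis {V₁ V₂ : Type} [DecidableEq V₁] (A₁ : Matrix V₁ V₂ (ZMod 2))
    (Bs : Set (V₁ ⊕ V₂)) : Prop :=
  bimIndep A₁ Bs ∧ ∀ B', Bs ⊆ B' → bimIndep A₁ B' → B' = Bs

/-- Independence in the dual matroid `M*`: a set is independent in the dual iff it is
disjoint from some basis of `M`. -/
def bimDualIndep {V₁ V₂ : Type} [DecidableEq V₁] (A₁ : Matrix V₁ V₂ (ZMod 2))
    (S : Set (V₁ ⊕ V₂)) : Prop :=
  ∃ Bs, bimBasis A₁ Bs ∧ Disjoint S Bs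


open Set Submodule

set_option linter.unusedSectionVars false
namespace BipIA

variable {V₁ V₂ : Type} [Fintype V₁] [Fintype V₂] [DecidableEq V₁] [DecidableEq V₂]

/-- Dual representation columns: `(A₁ᵀ | I)`. -/
def dCol (A₁ : Matrix V₁ V₂ (ZMod 2)) : V₁ ⊕ V₂ → V₂ → ZMod 2
  | Sum.inl i => fun w => A₁ i w
  | Sum.inr j => fun w => if w = j then 1 else 0

lemma sum_subtype_eq_sum_univ {α M : Type*} [Fintype α] [AddCommMonoid M]
    (T : Set α) [Fintype T] (f : α → M) (hf : ∀ e, e ∉ T → f e = 0) :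
    ∑ e : T, f e.val = ∑ e : α, f e := by
  classical
  have h1 : ∑ a ∈ T.toFinset, f a = ∑ a : T, f a.val :=
    Finset.sum_subtype _ (fun x => Set.mem_toFinset) f
  have h2 : ∑ a ∈ T.toFinset, f a = ∑ a : α, f a :=
    Finset.sum_subset (Finset.subset_univ _)
      (fun e _ he => hf e (fun hT => he (Set.mem_toFinset.2 hT)))
  rw [← h1, h2]

/-- The dot-product functional `c ↦ ∑ i, x i * c i` as a linear map. -/
def dotL (x : V₁ → ZMod 2) : (V₁ → ZMod 2) →ₗ[ZMod 2] ZMod 2 where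
  toFun c := ∑ i, x i * c i
  map_add' c d := by simp [mul_add, Finset.sum_add_distrib]
  map_smul' m c := by
    simp only [Pi.smul_apply, smul_eq_mul, RingHom.id_apply, Finset.mul_sum]
    exact Finset.sum_congr rfl fun i _ => by ring

@[simp] lemma dotL_single (x : V₁ → ZMod 2) (A₁ : Matrix V₁ V₂ (ZMod 2)) (i : V₁) :
    dotL x (bimCol A₁ (Sum.inl i)) = x i := by
  simp [dotL, bimCol, mul_ite, mul_one, mul_zero]

lemma dotL_col (x : V₁ → ZMod 2) (A₁ : Matrix V₁ V₂ (ZMod 2)) (j : V₂) :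
    dotL x (bimCol A₁ (Sum.inr j)) = ∑ i, x i * A₁ i j := rfl

lemma span_bimCol_univ (A₁ : Matrix V₁ V₂ (ZMod 2)) :
    Submodule.span (ZMod 2) (Set.range (bimCol A₁)) = ⊤ := by
  rw [eq_top_iff]
  intro c _
  have hc : c = ∑ i, c i • bimCol A₁ (Sum.inl i) := by
    conv_lhs => rw [pi_eq_sum_univ c]
    refine Finset.sum_congr rfl fun i _ => ?_
    congr 1
    funext w
    simp [bimCol, eq_comm]
  rw [hc]
  exact Submodule.sum_mem _ fun i _ =>
    Submodule.smul_mem _ _ (Submodule.subset_span ⟨Sum.inl i, rfl⟩)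

lemma exists_dot_of_ne_top {p : Submodule (ZMod 2) (V₁ → ZMod 2)} (hp : p ≠ ⊤) :
    ∃ x : V₁ → ZMod 2, x ≠ 0 ∧ ∀ c ∈ p, dotL x c = 0 := by
  obtain ⟨v, hv⟩ : ∃ v, v ∉ p := by
    by_contra h
    push_neg at h
    exact hp (eq_top_iff.2 fun v _ => h v)
  have hvq : p.mkQ v ≠ 0 := by
    rw [Submodule.mkQ_apply, ne_eq, Submodule.Quotient.mk_eq_zero]
    exact hv
  obtain ⟨φ, hφ⟩ : ∃ φ : Module.Dual (ZMod 2) ((V₁ → ZMod 2) ⧸ p), φ (p.mkQ v) ≠ 0 := by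
    by_contra h
    push_neg at h
    exact hvq ((Module.forall_dual_apply_eq_zero_iff (ZMod 2) _).1 h)
  set ψ : (V₁ → ZMod 2) →ₗ[ZMod 2] ZMod 2 := φ.comp p.mkQ with hψdef
  refine ⟨fun i => ψ (fun j => if i = j then 1 else 0), ?_, ?_⟩
  · intro h0
    apply hφ
    have : ψ v = 0 := by
      rw [LinearMap.pi_apply_eq_sum_univ ψ v]
      refine Finset.sum_eq_zero fun i _ => ?_
      rw [show ψ (fun j => if i = j then 1 else 0) = 0 from congrFun h0 i, smul_zero]
    simpa [ψ] using this
  · intro c hc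
    have hψc : ψ c = 0 := by
      simp [ψ, Submodule.mkQ_apply, (Submodule.Quotient.mk_eq_zero p).2 hc]
    have hexp : ∑ i, (ψ fun j => if i = j then 1 else 0) * c i = ψ c := by
      rw [LinearMap.pi_apply_eq_sum_univ ψ c]
      exact Finset.sum_congr rfl fun i _ => by rw [smul_eq_mul, mul_comm]
    simp only [dotL, LinearMap.coe_mk, AddHom.coe_mk]
    rw [hexp, hψc]

lemma sum_dCol_apply (A₁ : Matrix V₁ V₂ (ZMod 2)) (G : V₁ ⊕ V₂ → ZMod 2) (j : V₂) :
    ∑ e : V₁ ⊕ V₂, G e * dCol A₁ e j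
      = (∑ i, G (Sum.inl i) * A₁ i j) + G (Sum.inr j) := by
  rw [Fintype.sum_sum_type]
  congr 1
  simp [dCol, mul_ite, mul_one, mul_zero]


variable (A₁ : Matrix V₁ V₂ (ZMod 2))

/-- Restriction of a linearly independent family to a subset. -/
lemma restrict_mono {α M : Type*} [AddCommMonoid M] [Module (ZMod 2) M]
    {v : α → M} {s t : Set α} (hst : s ⊆ t)
    (ht : LinearIndependent (ZMod 2) (t.restrict v)) :
    LinearIndependent (ZMod 2) (s.restrict v) :=
  ht.comp (Set.inclusion hst) (Set.inclusion_injective hst)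

/-- If the `M`-columns of `Bs` span everything, then the dual columns of the complement
are linearly independent. -/
lemma dual_indep_of_span_top {Bs : Set (V₁ ⊕ V₂)}
    (hspan : Submodule.span (ZMod 2) (bimCol A₁ '' Bs) = ⊤) :
    LinearIndependent (ZMod 2) ((Bsᶜ).restrict (dCol A₁)) := by
  classical
  haveI : Fintype ↥(Bsᶜ) := (Set.toFinite _).fintype
  rw [Fintype.linearIndependent_iff]
  intro g hg
  set G : (V₁ ⊕ V₂) → ZMod 2 := fun e => if h : e ∈ Bsᶜ then g ⟨e, h⟩ else 0 with hGdef
  have hGoff : ∀ e, e ∉ Bsᶜ → G e = 0 := fun e he => dif_neg he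
  have hGval : ∀ (e : ↥(Bsᶜ)), G e.val = g e := fun e => dif_pos e.prop
  have h1 : ∀ j, (∑ i, G (Sum.inl i) * A₁ i j) + G (Sum.inr j) = 0 := by
    intro j
    have := congrFun hg j
    rw [Finset.sum_apply] at this
    have hconv : ∑ e : ↥(Bsᶜ), G e.val * dCol A₁ e.val j = 0 := by
      rw [show (∑ e : ↥(Bsᶜ), G e.val * dCol A₁ e.val j)
          = ∑ e : ↥(Bsᶜ), (g e • (Bsᶜ).restrict (dCol A₁) e) j from
        Finset.sum_congr rfl fun e _ => by
          simp [hGval e, Set.restrict, Set.restrict_apply, smul_eq_mul]]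
      rw [← Finset.sum_apply]
      rw [hg]
      rfl
    rw [← sum_dCol_apply A₁ G j,
      ← sum_subtype_eq_sum_univ (Bsᶜ) (fun e => G e * dCol A₁ e j)
        (fun e he => by show G e * _ = 0; rw [hGoff e he, zero_mul])]
    exact hconv
  set x : V₁ → ZMod 2 := fun i => G (Sum.inl i) with hx
  have hker : ∀ c ∈ Submodule.span (ZMod 2) (bimCol A₁ '' Bs), dotL x c = 0 := by
    intro c hc
    have : Submodule.span (ZMod 2) (bimCol A₁ '' Bs) ≤ LinearMap.ker (dotL x) := by
      rw [Submodule.span_le]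
      rintro _ ⟨e, heBs, rfl⟩
      rw [SetLike.mem_coe, LinearMap.mem_ker]
      rcases e with i | j
      · rw [dotL_single]
        exact hGoff _ (fun h => h heBs)
      · rw [dotL_col]
        have h2 := h1 j
        rw [hGoff (Sum.inr j) (fun h => h heBs), add_zero] at h2
        exact h2
    exact this hc
  have hx0 : ∀ i, x i = 0 := by
    intro i
    have := hker (bimCol A₁ (Sum.inl i)) (hspan ▸ Submodule.mem_top)
    rwa [dotL_single] at this
  have hy0 : ∀ j, G (Sum.inr j) = 0 := by
    intro j
    have h2 := h1 j
    rw [Finset.sum_eq_zero (fun i _ => by rw [show G (Sum.inl i) = 0 from hx0 i, zero_mul]),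
      zero_add] at h2
    exact h2
  intro e
  rw [← hGval e]
  rcases he : e.val with i | j
  · exact hx0 i
  · exact hy0 j

/-- Greedy maximality gives spanning. -/
lemma image_subset_span_of_max {U T : Set (V₁ ⊕ V₂)} (hTU : T ⊆ U)
    (hT : LinearIndependent (ZMod 2) (T.restrict (bimCol A₁)))
    (hmax : ∀ e ∈ U, e ∉ T →
      ¬ LinearIndependent (ZMod 2) ((insert e T).restrict (bimCol A₁))) :
    bimCol A₁ '' U ⊆ Submodule.span (ZMod 2) (bimCol A₁ '' T) := by
  rintro _ ⟨e, heU, rfl⟩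
  by_cases heT : e ∈ T
  · exact Submodule.subset_span (Set.mem_image_of_mem _ heT)
  · by_contra hv
    exact hmax e heU heT ((linearIndepOn_insert heT).2 ⟨hT, hv⟩)

/-- From a spanning collection of columns extract a basis of the matroid `M`. -/
lemma exists_basis_subset {W : Set (V₁ ⊕ V₂)}
    (hW : Submodule.span (ZMod 2) (bimCol A₁ '' W) = ⊤) :
    ∃ T ⊆ W, bimBasis A₁ T := by
  classical
  set 𝒮 : Set (Set (V₁ ⊕ V₂)) :=
    {T | T ⊆ W ∧ LinearIndependent (ZMod 2) (T.restrict (bimCol A₁))} with h𝒮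
  have h𝒮fin : 𝒮.Finite :=
    ((Set.toFinite W).finite_subsets).subset (fun T hT => hT.1)
  have h𝒮ne : 𝒮.Nonempty := ⟨∅, Set.empty_subset _, linearIndependent_empty_type⟩
  obtain ⟨T, hT𝒮, hTmax⟩ := Set.Finite.exists_maximalFor Set.ncard 𝒮 h𝒮fin h𝒮ne
  obtain ⟨hTW, hTind⟩ := hT𝒮
  have hins : ∀ e ∈ W, e ∉ T →
      ¬ LinearIndependent (ZMod 2) ((insert e T).restrict (bimCol A₁)) := by
    intro e heW heT hind
    have hmem : insert e T ∈ 𝒮 := ⟨Set.insert_subset heW hTW, hind⟩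
    have hcard : (insert e T).ncard = T.ncard + 1 := Set.ncard_insert_of_notMem heT
    have := hTmax hmem (by rw [hcard]; omega)
    rw [hcard] at this
    omega
  have hspanT : Submodule.span (ZMod 2) (bimCol A₁ '' T) = ⊤ := by
    rw [eq_top_iff, ← hW, Submodule.span_le]
    exact Set.Subset.trans (image_subset_span_of_max A₁ hTW hTind hins) (le_refl _)
  refine ⟨T, hTW, hTind, ?_⟩
  intro B' hTB' hB'ind
  by_contra hne
  obtain ⟨e, heB', heT⟩ : ∃ e, e ∈ B' ∧ e ∉ T := by
    rcases Set.not_subset.1 (fun h => hne (Set.Subset.antisymm h hTB')) with ⟨e, he1, he2⟩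
    exact ⟨e, he1, he2⟩
  have heB'd : e ∉ B' \ {e} := fun h => h.2 rfl
  have hrw : insert e (B' \ {e}) = B' := by
    rw [Set.insert_diff_singleton, Set.insert_eq_self.2 heB']
  have hB'ind' : LinearIndependent (ZMod 2) ((insert e (B' \ {e})).restrict (bimCol A₁)) := by
    rw [hrw]; exact hB'ind
  have := ((linearIndepOn_insert heB'd).1 hB'ind').2
  apply this
  have hTsub : T ⊆ B' \ {e} := fun a ha => ⟨hTB' ha, fun h => heT (h ▸ ha)⟩
  have : Submodule.span (ZMod 2) (bimCol A₁ '' T)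
      ≤ Submodule.span (ZMod 2) (bimCol A₁ '' (B' \ {e}))  :=
    Submodule.span_mono (Set.image_mono hTsub)
  rw [hspanT] at this
  exact this Submodule.mem_top

lemma span_compl_top_of_dual_indep {Q : Set (V₁ ⊕ V₂)}
    (hQ : LinearIndependent (ZMod 2) (Q.restrict (dCol A₁))) :
    Submodule.span (ZMod 2) (bimCol A₁ '' Qᶜ) = ⊤ := by
  classical
  by_contra hne
  obtain ⟨x, hx0, hdot⟩ := exists_dot_of_ne_top hne
  have hxoff : ∀ i, Sum.inl i ∉ Q → x i = 0 := by
    intro i hi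
    have := hdot _ (Submodule.subset_span
      (Set.mem_image_of_mem _ (show Sum.inl i ∈ Qᶜ from hi)))
    rwa [dotL_single] at this
  set y : V₂ → ZMod 2 := fun j => ∑ i, x i * A₁ i j with hy
  have hyoff : ∀ j, Sum.inr j ∉ Q → y j = 0 := by
    intro j hj
    have := hdot _ (Submodule.subset_span
      (Set.mem_image_of_mem _ (show Sum.inr j ∈ Qᶜ from hj)))
    rwa [dotL_col] at this
  set G : (V₁ ⊕ V₂) → ZMod 2 := Sum.elim x y with hG
  haveI : Fintype ↥Q := (Set.toFinite _).fintype
  have hdep : ∑ e : ↥Q, (fun e : ↥Q => G e.val) e • Q.restrict (dCol A₁) e = 0 := by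
    funext j
    simp only [Finset.sum_apply, Pi.zero_apply, Pi.smul_apply, smul_eq_mul, Set.restrict_apply]
    have hconv : ∑ e : ↥Q, G e.val * dCol A₁ e.val j = ∑ e, G e * dCol A₁ e j :=
      sum_subtype_eq_sum_univ Q (fun e => G e * dCol A₁ e j) (by
        rintro (i | j') he
        · show x i * _ = 0
          rw [hxoff i he, zero_mul]
        · show y j' * _ = 0
          rw [hyoff j' he, zero_mul])
    have : ∑ e : ↥Q, G e.val * dCol A₁ e.val j = 0 := by
      rw [hconv, sum_dCol_apply A₁ G j]
      show y j + y j = 0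
      exact CharTwo.add_self_eq_zero _
    exact this
  have hzero := Fintype.linearIndependent_iff.1 hQ (fun e : ↥Q => G e.val) hdep
  apply hx0
  funext i
  by_cases hiQ : Sum.inl i ∈ Q
  · exact hzero ⟨Sum.inl i, hiQ⟩
  · exact hxoff i hiQ

lemma dual_indep_iff {Q : Set (V₁ ⊕ V₂)} :
    LinearIndependent (ZMod 2) (Q.restrict (dCol A₁)) ↔ bimDualIndep A₁ Q := by
  constructor
  · intro hQ
    obtain ⟨T, hTW, hTbasis⟩ := exists_basis_subset A₁ (span_compl_top_of_dual_indep A₁ hQ)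
    exact ⟨T, hTbasis, Set.disjoint_left.2 fun a haQ haT => (hTW haT) haQ⟩
  · rintro ⟨Bs, ⟨hind, hmax⟩, hdisj⟩
    have hspan : Submodule.span (ZMod 2) (bimCol A₁ '' Bs) = ⊤ := by
      have hins : ∀ e ∈ (Set.univ : Set (V₁ ⊕ V₂)), e ∉ Bs →
          ¬ LinearIndependent (ZMod 2) ((insert e Bs).restrict (bimCol A₁)) := by
        intro e _ heBs hind'
        have heq := hmax _ (Set.subset_insert e Bs) hind'
        exact heBs (heq ▸ Set.mem_insert e Bs)
      have himg := image_subset_span_of_max A₁ (Set.subset_univ Bs) hind hins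
      rw [eq_top_iff, ← span_bimCol_univ A₁, Submodule.span_le]
      intro v hv
      rw [← Set.image_univ] at hv
      exact himg hv
    exact restrict_mono (fun a ha hb => Set.disjoint_left.1 hdisj ha hb)
      (dual_indep_of_span_top A₁ hspan)

/-- First embedding of the ground set of `M` into the ground set of `M[IA(G)]`. -/
def u₁ : V₁ ⊕ V₂ → (V₁ ⊕ V₂) ⊕ (V₁ ⊕ V₂)
  | Sum.inl i => Sum.inl (Sum.inl i)
  | Sum.inr j => Sum.inr (Sum.inr j)

/-- Second embedding of the ground set of `M*` into the ground set of `M[IA(G)]`. -/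
def u₂ : V₁ ⊕ V₂ → (V₁ ⊕ V₂) ⊕ (V₁ ⊕ V₂)
  | Sum.inl i => Sum.inr (Sum.inl i)
  | Sum.inr j => Sum.inl (Sum.inr j)

lemma u₁_inj : Function.Injective (u₁ (V₁ := V₁) (V₂ := V₂)) := by
  rintro (i | j) (i' | j') h <;> simp_all [u₁]

lemma u₂_inj : Function.Injective (u₂ (V₁ := V₁) (V₂ := V₂)) := by
  rintro (i | j) (i' | j') h <;> simp_all [u₂]

lemma u₁_ne_u₂ (a b : V₁ ⊕ V₂) : u₁ a ≠ u₂ b := by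
  rcases a with i | j <;> rcases b with i' | j' <;> simp [u₁, u₂]

lemma split (S : Set ((V₁ ⊕ V₂) ⊕ (V₁ ⊕ V₂))) :
    iaIndep (bipAdj A₁) S ↔
      (LinearIndependent (ZMod 2) ((u₁ ⁻¹' S).restrict (bimCol A₁)) ∧
       LinearIndependent (ZMod 2) ((u₂ ⁻¹' S).restrict (dCol A₁))) := by
  classical
  set P := u₁ ⁻¹' S with hPdef
  set Q := u₂ ⁻¹' S with hQdef
  set t : ↥P ⊕ ↥Q → ↥S :=
    Sum.elim (fun p : ↥P => (⟨u₁ p.val, p.prop⟩ : ↥S))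
      (fun q : ↥Q => (⟨u₂ q.val, q.prop⟩ : ↥S)) with ht
  have hinj : Function.Injective t := by
    rintro (p | q) (p' | q') h <;>
      simp only [t, Sum.elim_inl, Sum.elim_inr, Subtype.mk.injEq] at h
    · exact congrArg Sum.inl (Subtype.ext (u₁_inj h))
    · exact absurd h (u₁_ne_u₂ _ _)
    · exact absurd h.symm (u₁_ne_u₂ _ _)
    · exact congrArg Sum.inr (Subtype.ext (u₂_inj h))
  have hcover : ∀ z : (V₁ ⊕ V₂) ⊕ (V₁ ⊕ V₂), (∃ e, u₁ e = z) ∨ (∃ e, u₂ e = z) := by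
    rintro ((i | j) | (i | j))
    · exact Or.inl ⟨Sum.inl i, rfl⟩
    · exact Or.inr ⟨Sum.inr j, rfl⟩
    · exact Or.inr ⟨Sum.inl i, rfl⟩
    · exact Or.inl ⟨Sum.inr j, rfl⟩
  have hsurj : Function.Surjective t := by
    intro s
    rcases hcover s.val with ⟨e, he⟩ | ⟨e, he⟩
    · exact ⟨Sum.inl ⟨e, show u₁ e ∈ S by rw [he]; exact s.prop⟩, Subtype.ext he⟩
    · exact ⟨Sum.inr ⟨e, show u₂ e ∈ S by rw [he]; exact s.prop⟩, Subtype.ext he⟩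
  set eqv : ↥P ⊕ ↥Q ≃ ↥S := Equiv.ofBijective t ⟨hinj, hsurj⟩ with heqv
  have step1 : iaIndep (bipAdj A₁) S ↔
      LinearIndependent (ZMod 2) ((S.restrict (iaCol (bipAdj A₁))) ∘ eqv) :=
    (linearIndependent_equiv eqv).symm
  set φ := LinearEquiv.sumArrowLequivProdArrow V₁ V₂ (ZMod 2) (ZMod 2) with hφ
  have step2 : LinearIndependent (ZMod 2) ((S.restrict (iaCol (bipAdj A₁))) ∘ eqv) ↔
      LinearIndependent (ZMod 2) (⇑φ ∘ ((S.restrict (iaCol (bipAdj A₁))) ∘ eqv)) :=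
    (LinearMap.linearIndependent_iff φ.toLinearMap φ.ker).symm
  have step3 : ⇑φ ∘ ((S.restrict (iaCol (bipAdj A₁))) ∘ eqv) =
      Sum.elim (fun p : ↥P => ((bimCol A₁ p.val : V₁ → ZMod 2), (0 : V₂ → ZMod 2)))
        (fun q : ↥Q => ((0 : V₁ → ZMod 2), (dCol A₁ q.val : V₂ → ZMod 2))) := by
    funext z
    rcases z with p | q
    · have h0 : (eqv (Sum.inl p)).val = u₁ p.val := rfl
      rcases hp : p.val with i | j <;>
      · refine Prod.ext (funext fun w => ?_) (funext fun w => ?_) <;>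
          simp [hφ, Function.comp, Set.restrict, Set.restrict_apply, h0, hp,
            LinearEquiv.sumArrowLequivProdArrow_apply_fst,
            LinearEquiv.sumArrowLequivProdArrow_apply_snd,
            iaCol, bipAdj, bimCol, dCol, u₁]
    · have h0 : (eqv (Sum.inr q)).val = u₂ q.val := rfl
      rcases hq : q.val with i | j <;>
      · refine Prod.ext (funext fun w => ?_) (funext fun w => ?_) <;>
          simp [hφ, Function.comp, Set.restrict, Set.restrict_apply, h0, hq,
            LinearEquiv.sumArrowLequivProdArrow_apply_fst,
            LinearEquiv.sumArrowLequivProdArrow_apply_snd,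
            iaCol, bipAdj, bimCol, dCol, u₂]
  have iff₁ : LinearIndependent (ZMod 2)
      (fun p : ↥P => ((bimCol A₁ p.val : V₁ → ZMod 2), (0 : V₂ → ZMod 2))) ↔
      LinearIndependent (ZMod 2) (P.restrict (bimCol A₁)) := by
    rw [show (fun p : ↥P => ((bimCol A₁ p.val : V₁ → ZMod 2), (0 : V₂ → ZMod 2)))
        = ⇑(LinearMap.inl (ZMod 2) (V₁ → ZMod 2) (V₂ → ZMod 2)) ∘ (P.restrict (bimCol A₁)) from
      funext fun p => by simp [Set.restrict]]
    exact LinearMap.linearIndependent_iff _ Submodule.ker_inl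
  have iff₂ : LinearIndependent (ZMod 2)
      (fun q : ↥Q => ((0 : V₁ → ZMod 2), (dCol A₁ q.val : V₂ → ZMod 2))) ↔
      LinearIndependent (ZMod 2) (Q.restrict (dCol A₁)) := by
    rw [show (fun q : ↥Q => ((0 : V₁ → ZMod 2), (dCol A₁ q.val : V₂ → ZMod 2)))
        = ⇑(LinearMap.inr (ZMod 2) (V₁ → ZMod 2) (V₂ → ZMod 2)) ∘ (Q.restrict (dCol A₁)) from
      funext fun q => by simp [Set.restrict]]
    exact LinearMap.linearIndependent_iff _ Submodule.ker_inr
  have hdisj : Disjoint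
      (Submodule.span (ZMod 2) (Set.range
        (fun p : ↥P => ((bimCol A₁ p.val : V₁ → ZMod 2), (0 : V₂ → ZMod 2)))))
      (Submodule.span (ZMod 2) (Set.range
        (fun q : ↥Q => ((0 : V₁ → ZMod 2), (dCol A₁ q.val : V₂ → ZMod 2))))) := by
    have h1 : Submodule.span (ZMod 2) (Set.range
        (fun p : ↥P => ((bimCol A₁ p.val : V₁ → ZMod 2), (0 : V₂ → ZMod 2))))
        ≤ Submodule.prod ⊤ ⊥ := by
      rw [Submodule.span_le]
      rintro _ ⟨p, rfl⟩
      simp [Submodule.mem_prod]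
    have h2 : Submodule.span (ZMod 2) (Set.range
        (fun q : ↥Q => ((0 : V₁ → ZMod 2), (dCol A₁ q.val : V₂ → ZMod 2))))
        ≤ Submodule.prod ⊥ ⊤ := by
      rw [Submodule.span_le]
      rintro _ ⟨q, rfl⟩
      simp [Submodule.mem_prod]
    have hbot : Disjoint
        (Submodule.prod (⊤ : Submodule (ZMod 2) (V₁ → ZMod 2))
          (⊥ : Submodule (ZMod 2) (V₂ → ZMod 2)))
        (Submodule.prod (⊥ : Submodule (ZMod 2) (V₁ → ZMod 2))
          (⊤ : Submodule (ZMod 2) (V₂ → ZMod 2))) := by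
      rw [Submodule.disjoint_def]
      intro z hz1 hz2
      have ha := (Submodule.mem_prod.1 hz2).1
      have hb := (Submodule.mem_prod.1 hz1).2
      rw [Submodule.mem_bot] at ha hb
      exact Prod.ext ha hb
    exact Disjoint.mono h1 h2 hbot
  rw [step1, step2, step3, linearIndependent_sum, Sum.elim_comp_inl, Sum.elim_comp_inr]
  constructor
  · rintro ⟨h1, h2, -⟩
    exact ⟨iff₁.1 h1, iff₂.1 h2⟩
  · rintro ⟨h1, h2⟩
    exact ⟨iff₁.2 h1, iff₂.2 h2, hdisj⟩

/-- The relabelling bijection of the ground set. -/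
def swapFun : (V₁ ⊕ V₂) ⊕ (V₁ ⊕ V₂) → (V₁ ⊕ V₂) ⊕ (V₁ ⊕ V₂)
  | Sum.inl (Sum.inl i) => Sum.inl (Sum.inl i)
  | Sum.inl (Sum.inr j) => Sum.inr (Sum.inr j)
  | Sum.inr (Sum.inl i) => Sum.inr (Sum.inl i)
  | Sum.inr (Sum.inr j) => Sum.inl (Sum.inr j)

/-- The relabelling equivalence of the ground set (an involution). -/
def bigEquiv : ((V₁ ⊕ V₂) ⊕ (V₁ ⊕ V₂)) ≃ ((V₁ ⊕ V₂) ⊕ (V₁ ⊕ V₂)) :=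
  ⟨swapFun, swapFun, by rintro ((i | j) | (i | j)) <;> rfl,
    by rintro ((i | j) | (i | j)) <;> rfl⟩

end BipIA

/-- Let `G` be the bipartite simple graph with classes `V₁, V₂` and biadjacency matrix
`A₁`, and let `M` be the binary matroid represented by `(I | A₁)`.  Then `M[IA(G)]` is
isomorphic to the direct sum `M ⊕ M*`: there is a bijection `f` of ground sets under
which a set is independent in `M[IA(G)]` iff its part in the first summand is independent
in `M` and its part in the second summand is independent in `M*`. -/
theorem bipartite_ia_direct_sum {V₁ V₂ : Type} [Fintype V₁] [Fintype V₂]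
    [DecidableEq V₁] [DecidableEq V₂] (A₁ : Matrix V₁ V₂ (ZMod 2)) :
    ∃ f : ((V₁ ⊕ V₂) ⊕ (V₁ ⊕ V₂)) ≃ ((V₁ ⊕ V₂) ⊕ (V₁ ⊕ V₂)),
      ∀ S : Set ((V₁ ⊕ V₂) ⊕ (V₁ ⊕ V₂)),
        iaIndep (bipAdj A₁) S ↔
          (bimIndep A₁ (Sum.inl ⁻¹' (f '' S)) ∧ bimDualIndep A₁ (Sum.inr ⁻¹' (f '' S))) := by
  refine ⟨BipIA.bigEquiv, fun S => ?_⟩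
  have hP : Sum.inl ⁻¹' (BipIA.bigEquiv '' S) = BipIA.u₁ ⁻¹' S := by
    ext e
    rw [Set.mem_preimage, Set.mem_image_equiv]
    rcases e with i | j <;> rfl
  have hQ : Sum.inr ⁻¹' (BipIA.bigEquiv '' S) = BipIA.u₂ ⁻¹' S := by
    ext e
    rw [Set.mem_preimage, Set.mem_image_equiv]
    rcases e with i | j <;> rfl
  rw [hP, hQ]
  exact (BipIA.split A₁ S).trans
    (and_congr Iff.rfl (BipIA.dual_indep_iff A₁))
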